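/- Let R be the local ring at x of a reduced isolated non-normal singularity (X,x) of dimension ≥ 1, with normalization R̄ = (n_*O_{X̄})_x, a semilocal ring with r maximal ideals (one per irreducible component of (X,x)). Then the Jacobson radical J of R̄ is contained in R if and only if δ(X,x) := length_R(R̄/R) = r − 1, and in general δ(X,x) ≥ r − 1. -/

import Mathlib

set_option synthInstance.maxHeartbeats 1000000
set_option maxHeartbeats 1000000

open IsLocalRing

/-- The length of a module, realized as the Krull dimension of its submodule lattice
(this agrees with the usual length of a module). -/
noncomputable def moduleLength (R M : Type*) [Ring R] [AddCommGroup M] [Module R M] :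
    WithBot ℕ∞ :=
  Order.krullDim (Submodule R M)

private lemma fin_strictMono_bound {n : ℕ} {f : Fin (n + 1) → ℕ} (hf : StrictMono f) :
    f 0 + n ≤ f (Fin.last n) := by
  have key : ∀ i : Fin (n + 1), f 0 + (i : ℕ) ≤ f i := by
    intro i
    induction i using Fin.induction with
    | zero => simp
    | succ j ih =>
      have h1 : f j.castSucc < f j.succ := hf (Fin.castSucc_lt_succ (i := j))
      have h2 : (j.castSucc : ℕ) = (j : ℕ) := rfl
      have h3 : (j.succ : ℕ) = (j : ℕ) + 1 := rfl
      omega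
  simpa using key (Fin.last n)

private lemma krullDim_submodule_le_finrank (k V : Type*) [DivisionRing k] [AddCommGroup V]
    [Module k V] [FiniteDimensional k V] :
    Order.krullDim (Submodule k V) ≤ (Module.finrank k V : WithBot ℕ∞) := by
  rw [Order.krullDim_eq_iSup_length]
  rw [show (Module.finrank k V : WithBot ℕ∞) = ((Module.finrank k V : ℕ∞) : WithBot ℕ∞) from rfl,
    WithBot.coe_le_coe]
  apply iSup_le
  intro p
  rw [Nat.cast_le]
  have hsm : StrictMono fun i => Module.finrank k (p.toFun i) := fun a b h =>
    Submodule.finrank_lt_finrank_of_lt (p.strictMono h)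
  have := fin_strictMono_bound hsm
  have hle : Module.finrank k (p.toFun (Fin.last _)) ≤ Module.finrank k V :=
    Submodule.finrank_le _
  omega

/-- let `R` be the local ring of a reduced INNS with (semilocal)
normalization `S = R̄`, module-finite over `R`, having `r` maximal ideals, such that all
residue fields of `S` agree with that of `R` (the components are normal germs with
residue field the same as `R`'s). Then always `δ := length_R(S/R) ≥ r − 1`, and the
Jacobson radical `J` of `S` is contained in `R` iff `δ = r − 1`. -/
theorem jacobson_radical_sub_iff_delta_eq
    {R S : Type*} [CommRing R] [IsNoetherianRing R] [IsLocalRing R] [CommRing S]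
    [Algebra R S] (hinj : Function.Injective (algebraMap R S)) [Module.Finite R S]
    (r : ℕ) (hr : 1 ≤ r)
    (hfin : {I : Ideal S | I.IsMaximal}.Finite)
    (hmax : {I : Ideal S | I.IsMaximal}.ncard = r)
    (hres : ∀ M : Ideal S, M.IsMaximal → ∀ s : S, ∃ a : R, s - algebraMap R S a ∈ M)
    (hcomap : ∀ M : Ideal S, M.IsMaximal →
      Ideal.comap (algebraMap R S) M = maximalIdeal R) :
    ((r - 1 : ℕ) : WithBot ℕ∞) ≤
        moduleLength R (S ⧸ LinearMap.range (Algebra.linearMap R S)) ∧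
    ((∀ s ∈ Ideal.jacobson (⊥ : Ideal S), s ∈ Set.range (algebraMap R S)) ↔
      moduleLength R (S ⧸ LinearMap.range (Algebra.linearMap R S)) =
        ((r - 1 : ℕ) : WithBot ℕ∞)) := by
  classical
  -- enumeration of the maximal ideals
  have hcard : hfin.toFinset.card = r := by
    rw [← Set.ncard_eq_toFinset_card _ hfin]; exact hmax
  set eqv : hfin.toFinset ≃ Fin r := hfin.toFinset.equivFinOfCardEq hcard with heqv
  set M : Fin r → Ideal S := fun i => ((eqv.symm i : hfin.toFinset) : Ideal S) with hMdef
  have hM : ∀ i, (M i).IsMaximal := fun i => hfin.mem_toFinset.mp (eqv.symm i).2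
  have hMinj : Function.Injective M := fun i j h => by
    have := eqv.symm.injective (Subtype.ext h)
    exact this
  have hMsurj : ∀ I : Ideal S, I.IsMaximal → ∃ i, M i = I := by
    intro I hI
    refine ⟨eqv ⟨I, hfin.mem_toFinset.mpr hI⟩, ?_⟩
    simp [hMdef]
  set R' : Submodule R S := LinearMap.range (Algebra.linearMap R S) with hR'def
  have hmemR' : ∀ s : S, s ∈ R' ↔ s ∈ Set.range (algebraMap R S) := by
    intro s
    constructor
    · rintro ⟨a, rfl⟩; exact ⟨a, rfl⟩
    · rintro ⟨a, rfl⟩; exact ⟨a, rfl⟩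
  set G : ℕ → Ideal S := fun n => (Finset.univ.filter fun i : Fin r => (i : ℕ) ≤ n).inf M
    with hGdef
  have hGmem : ∀ (n : ℕ) (x : S), x ∈ G n ↔ ∀ i : Fin r, (i : ℕ) ≤ n → x ∈ M i := by
    intro n x
    simp [hGdef, Submodule.mem_finsetInf]
  set F : ℕ → Submodule R S := fun n => R' ⊔ Submodule.restrictScalars R (G n) with hFdef
  have hFR' : ∀ n, R' ≤ F n := fun n => le_sup_left
  -- the image of the maximal ideal of R lies in every M i
  have hm_le : ∀ (i : Fin r) (a : R), a ∈ maximalIdeal R → algebraMap R S a ∈ M i := by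
    intro i a ha
    rw [← hcomap (M i) (hM i)] at ha
    exact ha
  -- an element of R mapping into some M i lies in the maximal ideal
  have hm_ge : ∀ (i : Fin r) (a : R), algebraMap R S a ∈ M i → a ∈ maximalIdeal R := by
    intro i a ha
    rw [← hcomap (M i) (hM i)]
    exact ha
  -- avoidance: a finite inf of the M j's (excluding i₀) is not contained in M i₀
  have havoid : ∀ (s : Finset (Fin r)) (i₀ : Fin r), i₀ ∉ s → ¬ s.inf M ≤ M i₀ := by
    intro s i₀ hi₀ hle
    obtain ⟨j, hjs, hji⟩ := ((hM i₀).isPrime.inf_le').1 hle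
    have : M j = M i₀ := (hM j).eq_of_le (hM i₀).ne_top hji
    exact hi₀ (hMinj this ▸ hjs)
  -- splitting: get u ∈ ⋂_{i ∈ s} M i with 1 - u ∈ M i₀
  have hsplit : ∀ (s : Finset (Fin r)) (i₀ : Fin r), i₀ ∉ s →
      ∃ u : S, u ∈ s.inf M ∧ 1 - u ∈ M i₀ := by
    intro s i₀ hi₀
    have hnotle : ¬ s.inf M ≤ M i₀ := havoid s i₀ hi₀
    have hlt : M i₀ < s.inf M ⊔ M i₀ :=
      lt_of_le_of_ne le_sup_right fun h => hnotle (le_sup_left.trans h.ge)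
    have htop : s.inf M ⊔ M i₀ = ⊤ := (hM i₀).out.2 _ hlt
    have h1 : (1 : S) ∈ s.inf M ⊔ M i₀ := htop ▸ Submodule.mem_top
    obtain ⟨u, hu, v, hv, huv⟩ := Submodule.mem_sup.mp h1
    exact ⟨u, hu, by rw [← huv]; simpa using hv⟩
  -- strictness of the chain F
  have hFstrict : ∀ n : ℕ, n + 1 < r → F (n + 1) < F n := by
    intro n hn
    have hle : F (n + 1) ≤ F n := by
      apply sup_le_sup_left
      have : (Finset.univ.filter fun i : Fin r => (i : ℕ) ≤ n) ⊆
          (Finset.univ.filter fun i : Fin r => (i : ℕ) ≤ n + 1) := by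
        intro i hi
        simp only [Finset.mem_filter, Finset.mem_univ, true_and] at hi ⊢
        omega
      intro x hx
      exact Submodule.mem_finsetInf.mpr fun i hi =>
        Submodule.mem_finsetInf.mp hx i (this hi)
    set i₀ : Fin r := ⟨n + 1, hn⟩ with hi₀def
    have hi₀ : i₀ ∉ (Finset.univ.filter fun i : Fin r => (i : ℕ) ≤ n) := by
      simp [hi₀def]
    obtain ⟨u, hu, hu1⟩ := hsplit _ i₀ hi₀
    have huGn : u ∈ G n := hu
    have hunotF : u ∉ F (n + 1) := by
      intro hmem
      obtain ⟨x, hx, y, hy, hxy⟩ := Submodule.mem_sup.mp hmem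
      obtain ⟨a, ha⟩ := hx
      have ha' : algebraMap R S a = x := ha
      have hyG : y ∈ G (n + 1) := hy
      -- y ∈ M ⟨0⟩ and u ∈ M ⟨0⟩ give algebraMap a ∈ M ⟨0⟩, so a ∈ maximalIdeal R
      have h0r : (0 : ℕ) < r := by omega
      have hu0 : u ∈ M ⟨0, h0r⟩ := (hGmem n u).mp huGn ⟨0, h0r⟩ (by simp)
      have hy0 : y ∈ M ⟨0, h0r⟩ := (hGmem (n + 1) y).mp hyG ⟨0, h0r⟩ (by simp)
      have hx0 : algebraMap R S a ∈ M ⟨0, h0r⟩ := by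
        rw [ha']
        have : x = u - y := by rw [← hxy]; ring
        rw [this]
        exact sub_mem hu0 hy0
      have hamem : a ∈ maximalIdeal R := hm_ge _ a hx0
      -- then algebraMap a ∈ M i₀ and y ∈ M i₀, so u ∈ M i₀; with 1 - u ∈ M i₀, get 1 ∈ M i₀
      have hxi : algebraMap R S a ∈ M i₀ := hm_le i₀ a hamem
      have hyi : y ∈ M i₀ := (hGmem (n + 1) y).mp hyG i₀ (by simp [hi₀def])
      have hui : u ∈ M i₀ := by
        rw [← hxy, ← ha']
        exact add_mem hxi hyi
      have : (1 : S) ∈ M i₀ := by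
        have := add_mem hu1 hui
        simpa using this
      exact (hM i₀).ne_top (Ideal.eq_top_of_isUnit_mem _ this isUnit_one)
    refine lt_of_le_of_ne hle fun h => hunotF ?_
    rw [h]
    exact Submodule.mem_sup_right huGn
  -- mapping strictly through the quotient
  have hmaplt : ∀ {A B : Submodule R S}, R' ≤ A → A < B →
      Submodule.map R'.mkQ A < Submodule.map R'.mkQ B := by
    intro A B hA hAB
    refine lt_of_le_of_ne (Submodule.map_mono hAB.le) fun h => ?_
    have h1 : Submodule.comap R'.mkQ (Submodule.map R'.mkQ A) =
        Submodule.comap R'.mkQ (Submodule.map R'.mkQ B) := by rw [h]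
    rw [Submodule.comap_map_eq, Submodule.comap_map_eq, Submodule.ker_mkQ,
      sup_eq_left.mpr hA, sup_eq_left.mpr (hA.trans hAB.le)] at h1
    exact hAB.ne h1
  -- the LT series giving the lower bound
  set p : LTSeries (Submodule R (S ⧸ R')) :=
    ⟨r - 1, fun j => Submodule.map R'.mkQ (F (r - 1 - (j : ℕ))), by
      intro i
      have hi : (i : ℕ) < r - 1 := i.2
      have e1 : r - 1 - ((i.succ : Fin (r - 1 + 1)) : ℕ) = r - 2 - (i : ℕ) := by
        have : ((i.succ : Fin (r - 1 + 1)) : ℕ) = (i : ℕ) + 1 := rfl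
        omega
      have e2 : r - 1 - ((i.castSucc : Fin (r - 1 + 1)) : ℕ) = (r - 2 - (i : ℕ)) + 1 := by
        have : ((i.castSucc : Fin (r - 1 + 1)) : ℕ) = (i : ℕ) := rfl
        omega
      dsimp only
      rw [e1, e2]
      exact hmaplt (hFR' _) (hFstrict _ (by omega))⟩ with hpdef
  have part1 : ((r - 1 : ℕ) : WithBot ℕ∞) ≤ moduleLength R (S ⧸ R') := by
    have := Order.LTSeries.length_le_krullDim p
    exact this
  -- identification of the Jacobson radical
  have hJac : Ideal.jacobson (⊥ : Ideal S) = G (r - 1) := by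
    apply le_antisymm
    · refine Finset.le_inf fun i _ => sInf_le ⟨bot_le, hM i⟩
    · refine le_sInf fun J hJ => ?_
      obtain ⟨i, rfl⟩ := hMsurj J hJ.2
      exact Finset.inf_le (by simp only [Finset.mem_filter, Finset.mem_univ, true_and]; omega)
  constructor
  · exact part1
  constructor
  · -- J ⊆ R implies δ = r - 1
    intro hJR
    refine le_antisymm ?_ part1
    have hJR' : ∀ x : S, x ∈ Ideal.jacobson (⊥ : Ideal S) → x ∈ R' := fun x hx =>
      (hmemR' x).mpr (hJR x hx)
    -- idempotent-like elements
    have he : ∀ i : Fin r, ∃ u : S, u ∈ (Finset.univ.erase i).inf M ∧ 1 - u ∈ M i :=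
      fun i => hsplit _ i (Finset.notMem_erase i _)
    choose e he1 he2 using he
    have heM : ∀ i j : Fin r, j ≠ i → e i ∈ M j := fun i j hji =>
      Submodule.mem_finsetInf.mp (he1 i) j (Finset.mem_erase.mpr ⟨hji, Finset.mem_univ j⟩)
    set i₀ : Fin r := ⟨0, by omega⟩ with hi₀def
    set sset : Set S := e '' {i | i ≠ i₀} with hssetdef
    -- the key spanning fact
    have hspan : (⊤ : Submodule R S) ≤ R' ⊔ Submodule.span R sset := by
      intro s _
      choose a ha using fun i => hres (M i) (hM i) s
      have hkey : ∀ j : Fin r, s - ∑ i, algebraMap R S (a i) * e i ∈ M j := by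
        intro j
        rw [show (∑ i, algebraMap R S (a i) * e i)
            = algebraMap R S (a j) * e j
              + ∑ i ∈ Finset.univ.erase j, algebraMap R S (a i) * e i from
          (Finset.add_sum_erase _ _ (Finset.mem_univ j)).symm]
        have h1 : s - algebraMap R S (a j) ∈ M j := ha j
        have h2 : algebraMap R S (a j) * (1 - e j) ∈ M j := Ideal.mul_mem_left _ _ (he2 j)
        have h3 : ∑ i ∈ Finset.univ.erase j, algebraMap R S (a i) * e i ∈ M j :=
          Ideal.sum_mem _ fun i hi =>
            Ideal.mul_mem_left _ _ (heM i j (Finset.ne_of_mem_erase hi).symm)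
        have heq : s - (algebraMap R S (a j) * e j
              + ∑ i ∈ Finset.univ.erase j, algebraMap R S (a i) * e i)
            = (s - algebraMap R S (a j)) + algebraMap R S (a j) * (1 - e j)
              - ∑ i ∈ Finset.univ.erase j, algebraMap R S (a i) * e i := by ring
        rw [heq]
        exact sub_mem (add_mem h1 h2) h3
      have ht : s - ∑ i, algebraMap R S (a i) * e i ∈ R' := by
        apply hJR'
        rw [hJac]
        exact (hGmem _ _).mpr fun j _ => hkey j
      have hu : (1 : S) - ∑ i, e i ∈ R' := by
        apply hJR'
        rw [hJac]
        refine (hGmem _ _).mpr fun j _ => ?_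
        rw [show (∑ i, e i) = e j + ∑ i ∈ Finset.univ.erase j, e i from
          (Finset.add_sum_erase _ _ (Finset.mem_univ j)).symm]
        have h3 : ∑ i ∈ Finset.univ.erase j, e i ∈ M j :=
          Ideal.sum_mem _ fun i hi => heM i j (Finset.ne_of_mem_erase hi).symm
        have heq : (1 : S) - (e j + ∑ i ∈ Finset.univ.erase j, e i)
            = (1 - e j) - ∑ i ∈ Finset.univ.erase j, e i := by ring
        rw [heq]
        exact sub_mem (he2 j) h3
      have hdecomp : s = ((s - ∑ i, algebraMap R S (a i) * e i)
            - algebraMap R S (a i₀) * ((1 : S) - ∑ i, e i) + algebraMap R S (a i₀))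
          + ∑ i ∈ Finset.univ.erase i₀,
              (algebraMap R S (a i) - algebraMap R S (a i₀)) * e i := by
        simp only [sub_mul]
        rw [Finset.sum_sub_distrib, ← Finset.mul_sum,
          show (∑ i, algebraMap R S (a i) * e i)
            = algebraMap R S (a i₀) * e i₀
              + ∑ i ∈ Finset.univ.erase i₀, algebraMap R S (a i) * e i from
          (Finset.add_sum_erase _ _ (Finset.mem_univ i₀)).symm,
          show (∑ i, e i) = e i₀ + ∑ i ∈ Finset.univ.erase i₀, e i from
          (Finset.add_sum_erase _ _ (Finset.mem_univ i₀)).symm]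
        ring
      have hmem1 : (s - ∑ i, algebraMap R S (a i) * e i)
            - algebraMap R S (a i₀) * ((1 : S) - ∑ i, e i) + algebraMap R S (a i₀) ∈ R' := by
        refine add_mem (sub_mem ht ?_) ⟨a i₀, rfl⟩
        rw [show algebraMap R S (a i₀) * ((1 : S) - ∑ i, e i)
            = a i₀ • ((1 : S) - ∑ i, e i) from (Algebra.smul_def _ _).symm]
        exact Submodule.smul_mem _ _ hu
      have hmem2 : ∑ i ∈ Finset.univ.erase i₀,
            (algebraMap R S (a i) - algebraMap R S (a i₀)) * e i
          ∈ Submodule.span R sset := by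
        refine Submodule.sum_mem _ fun i hi => ?_
        have hbase : e i ∈ Submodule.span R sset :=
          Submodule.subset_span ⟨i, Finset.ne_of_mem_erase hi, rfl⟩
        rw [show (algebraMap R S (a i) - algebraMap R S (a i₀)) * e i
            = (a i - a i₀) • e i by rw [Algebra.smul_def, map_sub]]
        exact Submodule.smul_mem _ _ hbase
      rw [hdecomp]
      exact Submodule.mem_sup.mpr ⟨_, hmem1, _, hmem2, rfl⟩
    have hsup : R' ⊔ Submodule.span R sset = ⊤ := top_le_iff.mp hspan
    -- spanning in the quotient
    have hspanQ : Submodule.span R (R'.mkQ '' sset) = ⊤ := by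
      have h2 : Submodule.map R'.mkQ (R' ⊔ Submodule.span R sset) = ⊤ := by
        rw [hsup, Submodule.map_top, Submodule.range_mkQ]
      rw [Submodule.map_sup, Submodule.map_span] at h2
      have h3 : Submodule.map R'.mkQ R' = ⊥ := by
        apply le_bot_iff.mp
        rintro y ⟨x, hx, rfl⟩
        rw [Submodule.mem_bot, Submodule.mkQ_apply, Submodule.Quotient.mk_eq_zero]
        exact hx
      rw [h3, bot_sup_eq] at h2
      exact h2
    -- torsion structure, passing to the residue field
    have hT : Module.IsTorsionBySet R (S ⧸ R') ((maximalIdeal R : Ideal R) : Set R) := by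
      intro x a
      obtain ⟨y, rfl⟩ := R'.mkQ_surjective x
      rw [← map_smul, Submodule.mkQ_apply, Submodule.Quotient.mk_eq_zero]
      apply hJR'
      rw [hJac]
      refine (hGmem _ _).mpr fun j _ => ?_
      rw [Algebra.smul_def]
      exact Ideal.mul_mem_right _ _ (hm_le j a a.2)
    letI kMod : Module (R ⧸ maximalIdeal R) (S ⧸ R') := hT.module
    letI kField : Field (R ⧸ maximalIdeal R) := Ideal.Quotient.field _
    letI kTower : IsScalarTower R (R ⧸ maximalIdeal R) (S ⧸ R') :=
      Module.IsTorsionBySet.isScalarTower hT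
    set Φ : Submodule R (S ⧸ R') → Submodule (R ⧸ maximalIdeal R) (S ⧸ R') := fun p =>
      { carrier := p
        add_mem' := fun h1 h2 => p.add_mem h1 h2
        zero_mem' := p.zero_mem
        smul_mem' := by
          intro c x hx
          obtain ⟨b, rfl⟩ := Ideal.Quotient.mk_surjective c
          rw [hT.mk_smul]
          exact p.smul_mem b hx } with hPhidef
    have hΦ : StrictMono Φ := by
      intro p q hpq
      rw [SetLike.lt_iff_le_and_exists] at hpq ⊢
      obtain ⟨hle, x, hxq, hxp⟩ := hpq
      exact ⟨fun y hy => hle hy, x, hxq, hxp⟩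
    -- a small spanning finset in the quotient
    set tfin : Finset (S ⧸ R') := (Finset.univ.erase i₀).image fun i => R'.mkQ (e i)
      with htfindef
    have hcoet : (tfin : Set (S ⧸ R')) = R'.mkQ '' sset := by
      rw [htfindef, Finset.coe_image, hssetdef, Set.image_image]
      congr 1
      ext i
      simp [Finset.mem_erase]
    have hspank : Submodule.span (R ⧸ maximalIdeal R) ((tfin : Set (S ⧸ R'))) = ⊤ := by
      have hle : Submodule.span R (tfin : Set (S ⧸ R')) ≤
          Submodule.restrictScalars R
            (Submodule.span (R ⧸ maximalIdeal R) (tfin : Set (S ⧸ R'))) := by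
        rw [Submodule.span_le]
        exact Submodule.subset_span
      rw [hcoet, hspanQ] at hle
      rw [hcoet]
      exact (Submodule.restrictScalars_eq_top_iff _ _ _).mp (top_le_iff.mp hle)
    haveI : Module.Finite (R ⧸ maximalIdeal R) (S ⧸ R') := ⟨⟨tfin, hspank⟩⟩
    have hfr : Module.finrank (R ⧸ maximalIdeal R) (S ⧸ R') ≤ r - 1 := by
      have h1 := finrank_span_finset_le_card (R := R ⧸ maximalIdeal R) tfin
      rw [Set.finrank, hspank, finrank_top] at h1
      have h2 : tfin.card ≤ r - 1 := by
        refine le_trans Finset.card_image_le ?_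
        rw [Finset.card_erase_of_mem (Finset.mem_univ i₀), Finset.card_univ, Fintype.card_fin]
      omega
    calc moduleLength R (S ⧸ R')
        ≤ Order.krullDim (Submodule (R ⧸ maximalIdeal R) (S ⧸ R')) :=
          Order.krullDim_le_of_strictMono Φ hΦ
      _ ≤ (Module.finrank (R ⧸ maximalIdeal R) (S ⧸ R') : WithBot ℕ∞) :=
          krullDim_submodule_le_finrank _ _
      _ ≤ ((r - 1 : ℕ) : WithBot ℕ∞) := by
          rw [show ((r - 1 : ℕ) : WithBot ℕ∞) = (((r - 1 : ℕ) : ℕ∞) : WithBot ℕ∞) from rfl,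
            show (Module.finrank (R ⧸ maximalIdeal R) (S ⧸ R') : WithBot ℕ∞)
              = ((Module.finrank (R ⧸ maximalIdeal R) (S ⧸ R') : ℕ∞) : WithBot ℕ∞) from rfl,
            WithBot.coe_le_coe, Nat.cast_le]
          exact hfr
  · -- δ = r - 1 implies J ⊆ R
    intro hlen s hs
    by_contra hsR
    have hsR' : s ∉ R' := fun h => hsR ((hmemR' s).mp h)
    have hsG : s ∈ G (r - 1) := hJac ▸ hs
    have hbot : (⊥ : Submodule R (S ⧸ R')) < p.head := by
      have hne : R'.mkQ s ≠ 0 := by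
        intro h
        exact hsR' ((Submodule.Quotient.mk_eq_zero R').mp h)
      have hmem : R'.mkQ s ∈ p.head := by
        show R'.mkQ s ∈ Submodule.map R'.mkQ (F (r - 1 - ((0 : Fin (r - 1 + 1)) : ℕ)))
        refine Submodule.mem_map_of_mem ?_
        exact Submodule.mem_sup_right (by simpa using hsG)
      exact bot_lt_iff_ne_bot.mpr fun h => hne (by
        rw [h] at hmem
        simpa using hmem)
    set q : LTSeries (Submodule R (S ⧸ R')) := p.cons ⊥ hbot with hqdef
    have hq := Order.LTSeries.length_le_krullDim q
    have hqlen : q.length = r := by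
      rw [hqdef, RelSeries.cons_length]
      show r - 1 + 1 = r
      omega
    rw [hqlen] at hq
    have : (r : WithBot ℕ∞) ≤ ((r - 1 : ℕ) : WithBot ℕ∞) := by
      calc (r : WithBot ℕ∞) ≤ moduleLength R (S ⧸ R') := hq
      _ = ((r - 1 : ℕ) : WithBot ℕ∞) := hlen
    rw [show ((r : ℕ) : WithBot ℕ∞) = (((r : ℕ) : ℕ∞) : WithBot ℕ∞) from rfl,
      show ((r - 1 : ℕ) : WithBot ℕ∞) = (((r - 1 : ℕ) : ℕ∞) : WithBot ℕ∞) from rfl,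
      WithBot.coe_le_coe, Nat.cast_le] at this
    omega
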